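/- For every j ∈ {1, …, n+1}, R^n = r_{j−1}·(1 + ∑_{i=2}^{n+1} M_{i−1}^n/(β_{i−1} − r_{j−1})). -/

import Mathlib

open Finset Polynomial

lemma prod_neg' (s : Finset ℕ) (f : ℕ → ℝ) :
    ∏ i ∈ s, (-f i) = (-1) ^ s.card * ∏ i ∈ s, f i := by
  rw [← Finset.prod_const]
  rw [← Finset.prod_mul_distrib]
  simp

theorem stmt4 (n : ℕ) (hn : 1 ≤ n) (β r : ℕ → ℝ)
    (hr0 : 0 < r 0)
    (hinter : ∀ k, 1 ≤ k → k ≤ n → r (k - 1) < β k ∧ β k < r k)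
    (R : ℝ)
    (hR : R = (∏ k ∈ Finset.range (n + 1), r k) / ∏ k ∈ Finset.Icc 1 n, β k)
    (M : ℕ → ℝ)
    (hM : ∀ i, 1 ≤ i → i ≤ n →
      M i = ((∏ k ∈ Finset.range i, (β i - r k)) * ∏ k ∈ Finset.Icc i n, (r k - β i)) /
        (β i * (∏ k ∈ Finset.Ico 1 i, (β i - β k)) * ∏ k ∈ Finset.Icc (i + 1) n, (β k - β i))) :
    ∀ j, j ≤ n → R = r j * (1 + ∑ i ∈ Finset.Icc 1 n, M i / (β i - r j)) := by
  intro j hj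
  -- monotonicity of r
  have hrmono : ∀ k l, k ≤ l → l ≤ n → r k ≤ r l := by
    intro k l hkl hln
    induction l with
    | zero => simp_all
    | succ m ih =>
      rcases Nat.eq_or_lt_of_le hkl with h | h
      · rw [h]
      · have h1 := hinter (m + 1) (by omega) hln
        simp only [Nat.add_sub_cancel] at h1
        have := ih (by omega) (by omega)
        linarith [h1.1, h1.2]
  have hrpos : ∀ k, k ≤ n → 0 < r k := fun k hk => lt_of_lt_of_le hr0 (hrmono 0 k (by omega) hk)
  have hrβ : ∀ k i, 1 ≤ i → k < i → i ≤ n → r k < β i := by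
    intro k i h1 h2 h3
    have := hinter i h1 h3
    have := hrmono k (i - 1) (by omega) (by omega)
    linarith [this, (hinter i h1 h3).1]
  have hβr : ∀ i k, 1 ≤ i → i ≤ k → k ≤ n → β i < r k := by
    intro i k h1 h2 h3
    have := (hinter i h1 (by omega)).2
    have := hrmono i k h2 h3
    linarith
  have hβpos : ∀ i, 1 ≤ i → i ≤ n → 0 < β i := by
    intro i h1 h2
    have := hrβ 0 i h1 (by omega) h2
    linarith [hrpos 0 (by omega)]
  have hβlt : ∀ i m, 1 ≤ i → i < m → m ≤ n → β i < β m := by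
    intro i m h1 h2 h3
    have := hβr i i h1 le_rfl (by omega)
    have := hrβ i m (by omega) h2 h3
    linarith
  -- nonvanishing
  have hβrj : ∀ i, 1 ≤ i → i ≤ n → β i - r j ≠ 0 := by
    intro i h1 h2
    rcases le_or_gt i j with h | h
    · have := hβr i j h1 h hj
      intro hc; linarith
    · have := hrβ j i h1 h h2
      intro hc; linarith
  have hQne : ∀ m ∈ Finset.Icc 1 n, r j - β m ≠ 0 := by
    intro m hm
    simp only [Finset.mem_Icc] at hm
    have := hβrj m hm.1 hm.2
    intro hc; apply this; linarith
  have hBne : (∏ k ∈ Finset.Icc 1 n, β k) ≠ 0 :=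
    Finset.prod_ne_zero_iff.mpr fun i hi => by
      simp only [Finset.mem_Icc] at hi; exact ne_of_gt (hβpos i hi.1 hi.2)
  -- nodes
  set v : ℕ → ℝ := fun i => if i = 0 then 0 else β i with hv
  have hinj : Set.InjOn v (Finset.range (n + 1) : Set ℕ) := by
    intro a ha b hb hab
    simp only [Finset.coe_range, Set.mem_Iio] at ha hb
    rcases Nat.eq_zero_or_pos a with ha0 | ha0 <;> rcases Nat.eq_zero_or_pos b with hb0 | hb0
    · omega
    · exfalso; simp only [hv, ha0, if_pos, if_neg (by omega : b ≠ 0)] at hab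
      exact absurd hab.symm (ne_of_gt (hβpos b (by omega) (by omega)))
    · exfalso; simp only [hv, hb0, if_pos, if_neg (by omega : a ≠ 0)] at hab
      exact absurd hab (ne_of_gt (hβpos a (by omega) (by omega)))
    · simp only [hv, if_neg (by omega : a ≠ 0), if_neg (by omega : b ≠ 0)] at hab
      by_contra hne
      rcases Nat.lt_or_ge a b with h | h
      · exact absurd hab (ne_of_lt (hβlt a b (by omega) h (by omega)))
      · have : b < a := by omega
        exact absurd hab.symm (ne_of_lt (hβlt b a (by omega) this (by omega)))
  -- the polynomial
  set A : ℝ[X] := X * ∏ k ∈ Finset.Icc 1 n, (X - C (β k)) with hA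
  set B : ℝ[X] := ∏ k ∈ Finset.range (n + 1), (X - C (r k)) with hB
  have hAm : A.Monic := (monic_X).mul (monic_prod_of_monic _ _ fun k _ => monic_X_sub_C _)
  have hBm : B.Monic := monic_prod_of_monic _ _ fun k _ => monic_X_sub_C _
  have hAd : A.degree = (n + 1 : ℕ) := by
    rw [hA, degree_mul, degree_X, degree_prod]
    simp only [degree_X_sub_C]
    rw [Finset.sum_const, Nat.card_Icc]
    simp [Nat.smul_one_eq_cast, Nat.add_sub_cancel, add_comm]
  have hBd : B.degree = (n + 1 : ℕ) := by
    rw [hB, degree_prod]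
    simp only [degree_X_sub_C]
    rw [Finset.sum_const]
    simp
  have hdeg : (A - B).degree < (Finset.range (n + 1)).card := by
    rw [Finset.card_range]
    have := degree_sub_lt (hAd.trans hBd.symm) hAm.ne_zero (by rw [hAm.leadingCoeff, hBm.leadingCoeff])
    rw [hAd] at this
    exact_mod_cast this
  have hkey := Lagrange.eq_interpolate (s := Finset.range (n + 1)) (v := v) hinj hdeg
  -- abbreviations
  set Q : ℝ := ∏ m ∈ Finset.Icc 1 n, (r j - β m) with hQdef
  have hQ0 : Q ≠ 0 := Finset.prod_ne_zero_iff.mpr hQne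
  have hset : Finset.range (n + 1) = insert 0 (Finset.Icc 1 n) := by
    ext x; simp; omega
  have h0notin : (0 : ℕ) ∉ Finset.Icc 1 n := by simp
  -- the summand
  set g : ℕ → ℝ := fun i =>
    Polynomial.eval (v i) (A - B) *
      Polynomial.eval (r j) (Lagrange.basis (Finset.range (n + 1)) v i) with hg
  -- key identity from Lagrange interpolation
  have hsum : r j * Q = ∑ i ∈ Finset.range (n + 1), g i := by
    have hL : Polynomial.eval (r j) (A - B) = r j * Q := by
      have hBe : Polynomial.eval (r j) B = 0 := by
        rw [hB, Polynomial.eval_prod]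
        refine Finset.prod_eq_zero (Finset.mem_range.mpr (by omega : j < n + 1)) ?_
        simp
      rw [Polynomial.eval_sub, hBe, sub_zero, hA]
      simp [Polynomial.eval_prod, hQdef]
    have hRr : Polynomial.eval (r j)
        (Lagrange.interpolate (Finset.range (n + 1)) v
          fun i => Polynomial.eval (v i) (A - B)) = ∑ i ∈ Finset.range (n + 1), g i := by
      rw [Lagrange.interpolate_apply, Polynomial.eval_finset_sum]
      refine Finset.sum_congr rfl fun i _ => ?_
      rw [Polynomial.eval_mul, Polynomial.eval_C]
    rw [← hL, ← hRr]
    exact congrArg (Polynomial.eval (r j)) hkey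
  -- evaluating the basis polynomials
  have hbasis : ∀ i ∈ Finset.range (n + 1),
      Polynomial.eval (r j) (Lagrange.basis (Finset.range (n + 1)) v i) =
        ∏ m ∈ (Finset.range (n + 1)).erase i, ((v i - v m)⁻¹ * (r j - v m)) := by
    intro i _
    rw [Lagrange.basis, Polynomial.eval_prod]
    refine Finset.prod_congr rfl fun m _ => ?_
    simp [Lagrange.basisDivisor]
  -- the i = 0 term
  have hg0 : g 0 = R * Q := by
    have he : (Finset.range (n + 1)).erase 0 = Finset.Icc 1 n := by
      ext x; simp; omega
    have hv0 : v 0 = 0 := by simp [hv]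
    have hevalA : Polynomial.eval (0 : ℝ) A = 0 := by simp [hA]
    have hevalB : Polynomial.eval (0 : ℝ) B = ∏ k ∈ Finset.range (n + 1), (-(r k)) := by
      simp [hB, Polynomial.eval_prod]
    have hbe := hbasis 0 (by simp)
    rw [he] at hbe
    rw [hg]
    simp only
    rw [hbe, hv0, Polynomial.eval_sub, hevalA, hevalB, zero_sub]
    have hcongr : ∏ m ∈ Finset.Icc 1 n, ((0 - v m)⁻¹ * (r j - v m)) =
        ∏ m ∈ Finset.Icc 1 n, ((-(β m))⁻¹ * (r j - β m)) := by
      refine Finset.prod_congr rfl fun m hm => ?_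
      simp only [Finset.mem_Icc] at hm
      have hm0 : m ≠ 0 := by omega
      simp only [hv]
      rw [if_neg hm0]
      ring
    rw [hcongr, Finset.prod_mul_distrib, Finset.prod_inv_distrib,
      prod_neg' _ r, prod_neg' _ β, ← hQdef]
    rw [Finset.card_range, Nat.card_Icc, Nat.add_sub_cancel, hR]
    have h2 : ((-1 : ℝ) ^ n) * ((-1 : ℝ) ^ n) = 1 := by
      rw [← pow_add]; exact Even.neg_one_pow ⟨n, rfl⟩
    rw [pow_succ, mul_inv, inv_eq_of_mul_eq_one_left h2, div_eq_mul_inv]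
    linear_combination ((∏ k ∈ Finset.range (n + 1), r k) *
      (∏ k ∈ Finset.Icc 1 n, β k)⁻¹ * Q) * h2
  -- the i ∈ Icc 1 n terms
  have hgi : ∀ i ∈ Finset.Icc 1 n, g i = -(r j * (M i / (β i - r j)) * Q) := by
    intro i hi
    simp only [Finset.mem_Icc] at hi
    obtain ⟨hi1, hi2⟩ := hi
    have hβi0 : β i ≠ 0 := ne_of_gt (hβpos i hi1 hi2)
    have hvi : v i = β i := by
      simp only [hv]
      rw [if_neg (by omega : i ≠ 0)]
    set Pi : ℝ := ∏ k ∈ Finset.range (n + 1), (β i - r k) with hPidef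
    have hevalA : Polynomial.eval (β i) A = 0 := by
      rw [hA, Polynomial.eval_mul, Polynomial.eval_prod]
      have h2 : ∏ k ∈ Finset.Icc 1 n, Polynomial.eval (β i) (X - C (β k)) = 0 := by
        refine Finset.prod_eq_zero (Finset.mem_Icc.mpr ⟨hi1, hi2⟩) ?_
        simp
      rw [h2, mul_zero]
    have hevalAB : Polynomial.eval (v i) (A - B) = -Pi := by
      rw [hvi, Polynomial.eval_sub, hevalA, zero_sub, hB, Polynomial.eval_prod, hPidef]
      simp
    have he : (Finset.range (n + 1)).erase i = insert 0 ((Finset.Icc 1 n).erase i) := by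
      ext x; simp; omega
    have h0ne : (0 : ℕ) ∉ (Finset.Icc 1 n).erase i := by simp
    set E : ℝ := ∏ m ∈ (Finset.Icc 1 n).erase i, (β i - β m) with hEdef
    set Q' : ℝ := ∏ m ∈ (Finset.Icc 1 n).erase i, (r j - β m) with hQ'def
    have hE0 : E ≠ 0 := by
      refine Finset.prod_ne_zero_iff.mpr fun m hm => ?_
      simp only [Finset.mem_erase, Finset.mem_Icc] at hm
      obtain ⟨hmi, hm1, hm2⟩ := hm
      rcases Nat.lt_or_ge m i with h | h
      · have := hβlt m i hm1 h hi2
        intro hc; linarith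
      · have := hβlt i m hi1 (by omega) hm2
        intro hc; linarith
    have hQQ' : Q = (r j - β i) * Q' := by
      rw [hQdef, hQ'def, ← Finset.mul_prod_erase _ _ (Finset.mem_Icc.mpr ⟨hi1, hi2⟩)]
    have hbe := hbasis i (Finset.mem_range.mpr (by omega))
    rw [he, Finset.prod_insert h0ne] at hbe
    have hv0 : v 0 = 0 := by simp [hv]
    have hcongr : ∏ m ∈ (Finset.Icc 1 n).erase i, ((β i - v m)⁻¹ * (r j - v m)) =
        (∏ m ∈ (Finset.Icc 1 n).erase i, ((β i - β m)⁻¹ * (r j - β m))) := by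
      refine Finset.prod_congr rfl fun m hm => ?_
      simp only [Finset.mem_erase, Finset.mem_Icc] at hm
      have hm0 : m ≠ 0 := by omega
      simp only [hv]
      rw [if_neg hm0]
    have hgi' : g i = -Pi * ((β i)⁻¹ * r j) * (E⁻¹ * Q') := by
      rw [hg]
      simp only
      rw [hbe, hevalAB, hvi, hv0, hcongr, Finset.prod_mul_distrib,
        Finset.prod_inv_distrib, ← hEdef, ← hQ'def, sub_zero, sub_zero]
      ring
    have hMi : M i = -Pi / (β i * E) := by
      rw [hM i hi1 hi2]
      have hnum : ∏ k ∈ Finset.Icc i n, (r k - β i) =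
          (-1) ^ (Finset.Icc i n).card * ∏ k ∈ Finset.Icc i n, (β i - r k) := by
        rw [← prod_neg']
        refine Finset.prod_congr rfl fun k _ => by ring
      have hsplitnum : (∏ k ∈ Finset.range i, (β i - r k)) *
          ∏ k ∈ Finset.Icc i n, (β i - r k) = Pi := by
        rw [hPidef, Finset.range_eq_Ico, ← Finset.Ico_add_one_right_eq_Icc, Finset.range_eq_Ico,
          ← Finset.prod_Ico_consecutive _ (Nat.zero_le i) (by omega : i ≤ n + 1)]
      have hden : ∏ k ∈ Finset.Icc (i + 1) n, (β k - β i) =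
          (-1) ^ (Finset.Icc (i + 1) n).card * ∏ k ∈ Finset.Icc (i + 1) n, (β i - β k) := by
        rw [← prod_neg']
        refine Finset.prod_congr rfl fun k _ => by ring
      have hsplitE : (∏ k ∈ Finset.Ico 1 i, (β i - β k)) *
          ∏ k ∈ Finset.Icc (i + 1) n, (β i - β k) = E := by
        rw [hEdef]
        have hu : (Finset.Icc 1 n).erase i = Finset.Ico 1 i ∪ Finset.Icc (i + 1) n := by
          ext x; simp; omega
        rw [hu, Finset.prod_union (by
          simp only [Finset.disjoint_left, Finset.mem_Ico, Finset.mem_Icc]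
          omega)]
      have hc1 : (Finset.Icc i n).card = (n - i) + 1 := by rw [Nat.card_Icc]; omega
      have hc2 : (Finset.Icc (i + 1) n).card = n - i := by rw [Nat.card_Icc]; omega
      rw [hnum, hden, hc1, hc2, pow_succ, ← hsplitnum, ← hsplitE]
      have hprodne1 : (∏ k ∈ Finset.Ico 1 i, (β i - β k)) ≠ 0 := by
        refine Finset.prod_ne_zero_iff.mpr fun m hm => ?_
        simp only [Finset.mem_Ico] at hm
        have := hβlt m i hm.1 hm.2 hi2
        intro hc; linarith
      have hprodne2 : (∏ k ∈ Finset.Icc (i + 1) n, (β i - β k)) ≠ 0 := by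
        refine Finset.prod_ne_zero_iff.mpr fun m hm => ?_
        simp only [Finset.mem_Icc] at hm
        have := hβlt i m hi1 (by omega) hm.2
        intro hc; linarith
      have hd1 : (β i * ∏ k ∈ Finset.Ico 1 i, (β i - β k)) *
          ((-1 : ℝ) ^ (n - i) * ∏ k ∈ Finset.Icc (i + 1) n, (β i - β k)) ≠ 0 :=
        mul_ne_zero (mul_ne_zero hβi0 hprodne1)
          (mul_ne_zero (pow_ne_zero _ (by norm_num)) hprodne2)
      have hd2 : β i * ((∏ k ∈ Finset.Ico 1 i, (β i - β k)) *
          ∏ k ∈ Finset.Icc (i + 1) n, (β i - β k)) ≠ 0 :=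
        mul_ne_zero hβi0 (mul_ne_zero hprodne1 hprodne2)
      rw [div_eq_div_iff hd1 hd2]
      ring
    rw [hgi', hMi, hQQ']
    have hrjβ : β i - r j ≠ 0 := hβrj i hi1 hi2
    field_simp [hβi0, hE0, hrjβ]
    ring
  -- assemble
  rw [hset, Finset.sum_insert h0notin, hg0, Finset.sum_congr rfl hgi] at hsum
  have hfin : R * Q = (r j * (1 + ∑ i ∈ Finset.Icc 1 n, M i / (β i - r j))) * Q := by
    have h1 : (r j * (1 + ∑ i ∈ Finset.Icc 1 n, M i / (β i - r j))) * Q =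
        r j * Q + ∑ i ∈ Finset.Icc 1 n, (r j * (M i / (β i - r j)) * Q) := by
      rw [show (r j * (1 + ∑ i ∈ Finset.Icc 1 n, M i / (β i - r j))) * Q =
        r j * Q + (∑ i ∈ Finset.Icc 1 n, M i / (β i - r j)) * (r j * Q) by ring,
        Finset.sum_mul]
      congr 1
      refine Finset.sum_congr rfl fun i _ => by ring
    rw [Finset.sum_neg_distrib] at hsum
    rw [h1]
    linarith [hsum]
  exact mul_right_cancel₀ hQ0 hfin
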